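/- If A is a strongly tight MAD family, then the dominating number 𝔡 is at most the cardinality of A. -/

import Mathlib

/-- An ideal on a countable set: closed under subsets and finite unions,
contains all finite sets, and is proper. -/
def IsIdealOn {α : Type*} (I : Set (Set α)) : Prop :=
  (∀ A ∈ I, ∀ B : Set α, B ⊆ A → B ∈ I) ∧
  (∀ A ∈ I, ∀ B ∈ I, A ∪ B ∈ I) ∧
  (∀ A : Set α, A.Finite → A ∈ I) ∧
  Set.univ ∉ I

/-- The Shelah-Steprāns property of an ideal. -/
def ShelahSteprans {α : Type*} (I : Set (Set α)) : Prop :=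
  ∀ X : Set (Set α),
    (∀ s ∈ X, s.Finite ∧ s.Nonempty) →
    (∀ A ∈ I, ∃ s ∈ X, s ∩ A = ∅) →
    ∃ Y ⊆ X, Y.Infinite ∧ ⋃₀ Y ∈ I

def IsADFamily (𝒜 : Set (Set ℕ)) : Prop :=
  𝒜.Infinite ∧ (∀ A ∈ 𝒜, A.Infinite) ∧
  ∀ A ∈ 𝒜, ∀ B ∈ 𝒜, A ≠ B → (A ∩ B).Finite

def IsMADFamily (𝒜 : Set (Set ℕ)) : Prop :=
  IsADFamily 𝒜 ∧ ∀ X : Set ℕ, X.Infinite → ∃ A ∈ 𝒜, (X ∩ A).Infinite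

def idealOf (𝒜 : Set (Set ℕ)) : Set (Set ℕ) :=
  {B | ∃ F : Set (Set ℕ), F ⊆ 𝒜 ∧ F.Finite ∧ (B \ ⋃₀ F).Finite}

def StronglyTight (I : Set (Set ℕ)) : Prop :=
  ∀ X : ℕ → Set ℕ, (∀ n, (X n).Infinite) →
    (∀ Y ∈ I, {n : ℕ | (X n \ Y).Finite}.Finite) →
    ∃ A ∈ I, ∀ n, (A ∩ X n).Nonempty

/-- The dominating number 𝔡: the least cardinality of a family of functions
dominating (mod finite) every function `ℕ → ℕ`. -/
noncomputable def domNumber : Cardinal :=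
  sInf {c : Cardinal | ∃ D : Set (ℕ → ℕ), Cardinal.mk ↥D = c ∧
    ∀ f : ℕ → ℕ, ∃ g ∈ D, ∀ᶠ n in Filter.atTop, f n ≤ g n}

/-- If `𝒜` is a strongly tight MAD family then `𝔡 ≤ |𝒜|`. -/
theorem domNumber_le_of_stronglyTight (𝒜 : Set (Set ℕ))
    (hmad : IsMADFamily 𝒜) (hst : StronglyTight (idealOf 𝒜)) :
    domNumber ≤ Cardinal.mk ↥𝒜 := by
  classical
  obtain ⟨⟨hinf, hAinf, hAD⟩, -⟩ := hmad
  haveI : Infinite ↥𝒜 := hinf.to_subtype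
  let e : ℕ ↪ ↥𝒜 := Infinite.natEmbedding ↥𝒜
  let B : ℕ → Set ℕ := fun n => (e n : Set ℕ)
  have hB𝒜 : ∀ n, B n ∈ 𝒜 := fun n => (e n).2
  have hBinj : Function.Injective B := fun a b h => e.injective (Subtype.ext h)
  let U : Finset ↥𝒜 → Set ℕ := fun F => ⋃ a ∈ F, (a : Set ℕ)
  let g : Finset ↥𝒜 → ℕ → ℕ := fun F n => sSup (B n ∩ U F) + 1
  have hfinint : ∀ (n : ℕ) (F : Set (Set ℕ)), F ⊆ 𝒜 → F.Finite → B n ∉ F →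
      (B n ∩ ⋃₀ F).Finite := by
    intro n F hF hFfin hnF
    have hsub : (B n ∩ ⋃₀ F) ⊆ ⋃ A ∈ F, (B n ∩ A) := by
      rintro m ⟨hm, A, hA, hmA⟩
      exact Set.mem_biUnion hA ⟨hm, hmA⟩
    refine Set.Finite.subset (hFfin.biUnion fun A hA => ?_) hsub
    exact hAD _ (hB𝒜 n) A (hF hA) (fun h => hnF (h ▸ hA))
  have hdom : ∀ f : ℕ → ℕ, ∃ F : Finset ↥𝒜, ∀ᶠ n in Filter.atTop, f n ≤ g F n := by
    intro f
    by_contra hcon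
    push_neg at hcon
    have hfreq : ∀ F : Finset ↥𝒜, {n | g F n < f n}.Infinite := by
      intro F
      have h1 : ∃ᶠ n in Filter.atTop, g F n < f n := by
        have := hcon F
        exact this
      rw [← Nat.cofinite_eq_atTop] at h1
      exact Filter.frequently_cofinite_iff_infinite.1 h1
    set c : ℕ → ℕ := fun n => max (f n) n with hc
    set X : ℕ → Set ℕ := fun n => {m | m ∈ B n ∧ c n < m} with hXdef
    have hXinf : ∀ n, (X n).Infinite := by
      intro n
      have hsub : B n \ Set.Iic (c n) ⊆ X n := by
        rintro m ⟨hm, hm2⟩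
        exact ⟨hm, by simpa using hm2⟩
      exact (((hAinf _ (hB𝒜 n)).diff (Set.finite_Iic _)).mono hsub)
    have hXhyp : ∀ Y ∈ idealOf 𝒜, {n | (X n \ Y).Finite}.Finite := by
      rintro Y ⟨F, hF𝒜, hFfin, hYfin⟩
      have hsub : {n | (X n \ Y).Finite} ⊆ B ⁻¹' F := by
        intro n hn
        by_contra hnF
        have h1 : (B n \ X n).Finite := by
          apply (Set.finite_Iic (c n)).subset
          rintro m ⟨hm, hm2⟩
          exact Set.mem_Iic.2 (not_lt.1 fun h => hm2 ⟨hm, h⟩)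
        have h2 : (B n \ Y).Finite := by
          refine (hn.union h1).subset ?_
          intro m hm
          by_cases h : m ∈ X n
          · exact Or.inl ⟨h, hm.2⟩
          · exact Or.inr ⟨hm.1, h⟩
        have h3 : (B n \ ⋃₀ F).Finite := by
          refine (h2.union hYfin).subset ?_
          intro m hm
          by_cases h : m ∈ Y
          · exact Or.inr ⟨h, hm.2⟩
          · exact Or.inl ⟨hm.1, h⟩
        have h4 : (B n).Finite := by
          refine (h3.union (hfinint n F hF𝒜 hFfin hnF)).subset ?_
          intro m hm
          by_cases h : m ∈ ⋃₀ F
          · exact Or.inr ⟨hm, h⟩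
          · exact Or.inl ⟨hm, h⟩
        exact (hAinf _ (hB𝒜 n)) h4
      exact (hFfin.preimage hBinj.injOn).subset hsub
    obtain ⟨A, hA, hmeet⟩ := hst X hXinf hXhyp
    obtain ⟨F, hF𝒜, hFfin, hsfin⟩ := hA
    let S : Set ↥𝒜 := Subtype.val ⁻¹' F
    have hSfin : S.Finite := hFfin.preimage Subtype.val_injective.injOn
    let F' : Finset ↥𝒜 := hSfin.toFinset
    have hUeq : U F' = ⋃₀ F := by
      ext m
      simp only [U, Set.mem_iUnion, Set.mem_sUnion, Set.Finite.mem_toFinset, F', S,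
        Set.mem_preimage, exists_prop]
      constructor
      · rintro ⟨a, ha, hma⟩; exact ⟨a, ha, hma⟩
      · rintro ⟨A', hA', hmA'⟩; exact ⟨⟨A', hF𝒜 hA'⟩, hA', hmA'⟩
    have hbad : ((B ⁻¹' F) ∪ Set.Iic (sSup (A \ ⋃₀ F))).Finite :=
      (hFfin.preimage hBinj.injOn).union (Set.finite_Iic _)
    obtain ⟨n, hn⟩ := ((hfreq F').diff hbad).nonempty
    obtain ⟨hn1, hn2⟩ := hn
    have hnF : B n ∉ F := fun h => hn2 (Or.inl h)
    have hns : sSup (A \ ⋃₀ F) < n := by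
      by_contra h
      exact hn2 (Or.inr (Set.mem_Iic.2 (not_lt.1 h)))
    obtain ⟨m, hmA, hmX⟩ := hmeet n
    obtain ⟨hmB, hmc⟩ := hmX
    have hfc : f n ≤ c n := le_max_left _ _
    have hnc : n ≤ c n := le_max_right _ _
    by_cases hmF : m ∈ ⋃₀ F
    · have hfin : (B n ∩ U F').Finite := by
        rw [hUeq]; exact hfinint n F hF𝒜 hFfin hnF
      have hle : m ≤ sSup (B n ∩ U F') := by
        refine le_csSup hfin.bddAbove ?_
        rw [hUeq]; exact ⟨hmB, hmF⟩
      have hlt : sSup (B n ∩ U F') + 1 < f n := hn1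
      omega
    · have hle : m ≤ sSup (A \ ⋃₀ F) := le_csSup hsfin.bddAbove ⟨hmA, hmF⟩
      omega
  let D : Set (ℕ → ℕ) := Set.range g
  have hD : ∀ f : ℕ → ℕ, ∃ g' ∈ D, ∀ᶠ n in Filter.atTop, f n ≤ g' n := by
    intro f
    obtain ⟨F, hF⟩ := hdom f
    exact ⟨g F, Set.mem_range_self F, hF⟩
  have h1 : domNumber ≤ Cardinal.mk ↥D := csInf_le' ⟨D, rfl, hD⟩
  refine h1.trans (le_trans Cardinal.mk_range_le ?_)
  exact (Cardinal.mk_finset_of_infinite ↥𝒜).le
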